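/- Let F, F̃ : ℝ^d → ℝ be differentiable functions such that the gradient of F is L-Lipschitz for some L > 0. Fix w ∈ ℝ^d and suppose ‖∇F̃(w) − ∇F(w)‖ ≤ ω·‖∇F(w)‖ + ε for constants ω ∈ [0,1) and ε ≥ 0. If 0 < η ≤ (1−ω)/(4·L·(1+ω)²) and w⁺ = w − η·∇F̃(w), then F(w⁺) ≤ F(w) − (η·(1−ω)/2)·‖∇F(w)‖² + η·ε²/(1−ω) + L·η²·ε². -/

import Mathlib

open InnerProductSpace intervalIntegral

local notation "⟪" x ", " y "⟫" => @inner ℝ _ _ x y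

lemma descent_lemma {d : ℕ} (f : EuclideanSpace ℝ (Fin d) → ℝ) (hf : Differentiable ℝ f)
    (L : ℝ) (hL : 0 ≤ L)
    (hLip : ∀ v u, ‖gradient f v - gradient f u‖ ≤ L * ‖v - u‖)
    (w u : EuclideanSpace ℝ (Fin d)) :
    f (w + u) ≤ f w + ⟪gradient f w, u⟫ + L / 2 * ‖u‖ ^ 2 := by
  have hgc : Continuous (gradient f) := by
    refine (LipschitzWith.of_dist_le_mul (K := ⟨L, hL⟩) ?_).continuous
    intro x y
    rw [dist_eq_norm, dist_eq_norm]
    exact hLip x y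
  set φ : ℝ → ℝ := fun t => f (w + t • u) with hφ
  have hline : ∀ t : ℝ, HasDerivAt (fun t : ℝ => w + t • u) u t := by
    intro t
    simpa using (hasDerivAt_id t).smul_const u |>.const_add w
  have hderiv : ∀ t : ℝ, HasDerivAt φ ⟪gradient f (w + t • u), u⟫ t := by
    intro t
    have h1 : HasFDerivAt f ((toDual ℝ _) (gradient f (w + t • u))) (w + t • u) :=
      hasGradientAt_iff_hasFDerivAt.mp (hf _).hasGradientAt
    have h2 := h1.comp_hasDerivAt t (hline t)
    simp only [Function.comp_def] at h2
    exact h2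
  have hcont : Continuous fun t : ℝ => ⟪gradient f (w + t • u), u⟫ := by
    exact (hgc.comp (continuous_const.add (continuous_id.smul continuous_const))).inner continuous_const
  have hint : f (w + u) - f w = ∫ t in (0:ℝ)..1, ⟪gradient f (w + t • u), u⟫ := by
    rw [intervalIntegral.integral_eq_sub_of_hasDerivAt (fun t _ => hderiv t)
      (hcont.intervalIntegrable 0 1)]
    simp [hφ]
  have hbound : (∫ t in (0:ℝ)..1, ⟪gradient f (w + t • u), u⟫)
      ≤ ∫ t in (0:ℝ)..1, (⟪gradient f w, u⟫ + L * t * ‖u‖ ^ 2) := by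
    have hc2 : Continuous fun t : ℝ => ⟪gradient f w, u⟫ + L * t * ‖u‖ ^ 2 :=
      continuous_const.add (((continuous_const.mul continuous_id).mul continuous_const))
    apply intervalIntegral.integral_mono_on (by norm_num)
      (hcont.intervalIntegrable 0 1) (hc2.intervalIntegrable 0 1)
    intro t ht
    have h1 : ⟪gradient f (w + t • u) - gradient f w, u⟫ ≤ L * t * ‖u‖ ^ 2 := by
      calc ⟪gradient f (w + t • u) - gradient f w, u⟫
          ≤ ‖gradient f (w + t • u) - gradient f w‖ * ‖u‖ := real_inner_le_norm _ _
        _ ≤ (L * ‖(w + t • u) - w‖) * ‖u‖ := by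
            exact mul_le_mul_of_nonneg_right (hLip _ _) (norm_nonneg _)
        _ = L * (|t| * ‖u‖) * ‖u‖ := by rw [add_sub_cancel_left, norm_smul]; norm_num
        _ = L * t * ‖u‖ ^ 2 := by rw [abs_of_nonneg ht.1]; ring
    have := inner_sub_left (𝕜 := ℝ) (gradient f (w + t • u)) (gradient f w) u
    linarith [h1, this.symm.le, this.le]
  have hval : (∫ t in (0:ℝ)..1, (⟪gradient f w, u⟫ + L * t * ‖u‖ ^ 2))
      = ⟪gradient f w, u⟫ + L / 2 * ‖u‖ ^ 2 := by
    have hc3 : Continuous fun t : ℝ => L * t * ‖u‖ ^ 2 := by fun_prop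
    rw [intervalIntegral.integral_add (Continuous.intervalIntegrable continuous_const 0 1)
      (hc3.intervalIntegrable 0 1)]
    have h2 : (∫ t in (0:ℝ)..1, L * t * ‖u‖ ^ 2) = L / 2 * ‖u‖ ^ 2 := by
      have he : (fun t : ℝ => L * t * ‖u‖ ^ 2) = fun t : ℝ => t * (L * ‖u‖ ^ 2) := by
        ext t; ring
      rw [he, intervalIntegral.integral_mul_const, integral_id]
      ring
    rw [h2, intervalIntegral.integral_const]
    simp
  rw [hval] at hbound
  linarith [hint.le.trans hbound]

lemma arith_aux (L ω ε η G Gt I FW FP : ℝ)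
    (hL : 0 < L) (hω0 : 0 ≤ ω) (hω1 : ω < 1) (hε : 0 ≤ ε)
    (hη0 : 0 < η) (hη : η ≤ (1 - ω) / (4 * L * (1 + ω) ^ 2))
    (hGnn : 0 ≤ G) (hGtnn : 0 ≤ Gt)
    (hA : FP ≤ FW - η * I + L / 2 * η ^ 2 * Gt ^ 2)
    (hI : (1 - ω) * G ^ 2 - ε * G ≤ I)
    (hGt : Gt ≤ (1 + ω) * G + ε) :
    FP ≤ FW - (η * (1 - ω) / 2) * G ^ 2 + η * ε ^ 2 / (1 - ω) + L * η ^ 2 * ε ^ 2 := by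
  have h1ω : (0:ℝ) < 1 - ω := by linarith
  have hGt2 : Gt ^ 2 ≤ 2 * (1 + ω) ^ 2 * G ^ 2 + 2 * ε ^ 2 := by
    nlinarith [sq_nonneg ((1 + ω) * G - ε)]
  have hη' : L * η * (1 + ω) ^ 2 ≤ (1 - ω) / 4 := by
    have hpos : (0:ℝ) < 4 * L * (1 + ω) ^ 2 := by positivity
    have h5 := (le_div_iff₀ hpos).mp hη
    calc L * η * (1 + ω) ^ 2 = η * (4 * L * (1 + ω) ^ 2) / 4 := by ring
      _ ≤ (1 - ω) / 4 := by linarith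
  have hAM : ε * G ≤ ε ^ 2 / (1 - ω) + (1 - ω) / 4 * G ^ 2 := by
    have key : (1 - ω) * (ε * G) ≤ ε ^ 2 + (1 - ω) ^ 2 / 4 * G ^ 2 := by
      nlinarith [sq_nonneg (2 * ε - (1 - ω) * G)]
    have h6 : ε * G = (1 - ω) * (ε * G) / (1 - ω) := by field_simp
    have h7 : (ε ^ 2 + (1 - ω) ^ 2 / 4 * G ^ 2) / (1 - ω)
        = ε ^ 2 / (1 - ω) + (1 - ω) / 4 * G ^ 2 := by field_simp
    rw [h6, ← h7]
    gcongr
  have hB : L / 2 * η ^ 2 * Gt ^ 2 ≤ L * η ^ 2 * (1 + ω) ^ 2 * G ^ 2 + L * η ^ 2 * ε ^ 2 := by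
    nlinarith [mul_le_mul_of_nonneg_left hGt2 (by positivity : (0:ℝ) ≤ L / 2 * η ^ 2)]
  have hC : L * η ^ 2 * (1 + ω) ^ 2 * G ^ 2 ≤ η * (1 - ω) / 4 * G ^ 2 := by
    nlinarith [mul_le_mul_of_nonneg_right hη' (by positivity : (0:ℝ) ≤ η * G ^ 2)]
  have hD : -(η * I) ≤ -(η * ((1 - ω) * G ^ 2 - ε * G)) := by
    have := mul_le_mul_of_nonneg_left hI hη0.le
    linarith
  have hE : η * (ε * G) ≤ η * (ε ^ 2 / (1 - ω) + (1 - ω) / 4 * G ^ 2) :=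
    mul_le_mul_of_nonneg_left hAM hη0.le
  have hq : η * ε ^ 2 / (1 - ω) = η * (ε ^ 2 / (1 - ω)) := by ring
  rw [hq]
  linarith [hA, hB, hC, hD, hE]

/-- **One-step descent lemma for inexact gradient descent (SCOPE, Theorem 1 proof).**
A single step along the surrogate gradient `∇F̃(w)`, which approximates `∇F(w)` with
relative error `ω` and additive error `ε`, decreases the `L`-smooth objective `F` up to
an additive error of order `ε²`. -/
theorem inexact_gd_one_step_descent
    {d : ℕ} (F Ft : EuclideanSpace ℝ (Fin d) → ℝ)
    (hF : Differentiable ℝ F) (hFt : Differentiable ℝ Ft)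
    (L : ℝ) (hL : 0 < L)
    (hLip : ∀ v u, ‖gradient F v - gradient F u‖ ≤ L * ‖v - u‖)
    (w : EuclideanSpace ℝ (Fin d))
    (ω ε : ℝ) (hω0 : 0 ≤ ω) (hω1 : ω < 1) (hε : 0 ≤ ε)
    (happrox : ‖gradient Ft w - gradient F w‖ ≤ ω * ‖gradient F w‖ + ε)
    (η : ℝ) (hη0 : 0 < η) (hη : η ≤ (1 - ω) / (4 * L * (1 + ω) ^ 2)) :
    F (w - η • gradient Ft w)
      ≤ F w - (η * (1 - ω) / 2) * ‖gradient F w‖ ^ 2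
        + η * ε ^ 2 / (1 - ω) + L * η ^ 2 * ε ^ 2 := by
  have hGnn : (0:ℝ) ≤ ‖gradient F w‖ := norm_nonneg _
  -- descent lemma applied with u = -η • gradient Ft w
  have hkey : F (w - η • gradient Ft w) ≤ F w + ⟪gradient F w, -η • gradient Ft w⟫
      + L / 2 * ‖-η • gradient Ft w‖ ^ 2 := by
    have := descent_lemma F hF L hL.le hLip w (-η • gradient Ft w)
    simpa [sub_eq_add_neg, neg_smul] using this
  have hA : F (w - η • gradient Ft w) ≤ F w - η * ⟪gradient F w, gradient Ft w⟫
      + L / 2 * η ^ 2 * ‖gradient Ft w‖ ^ 2 := by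
    have h1 : ⟪gradient F w, -η • gradient Ft w⟫ = -η * ⟪gradient F w, gradient Ft w⟫ := by
      rw [real_inner_smul_right]
    have h2 : ‖-η • gradient Ft w‖ ^ 2 = η ^ 2 * ‖gradient Ft w‖ ^ 2 := by
      rw [norm_smul]; simp [abs_of_pos hη0]; ring
    rw [h1, h2] at hkey
    linarith [hkey]
  -- inner product lower bound
  have hI : (1 - ω) * ‖gradient F w‖ ^ 2 - ε * ‖gradient F w‖
      ≤ ⟪gradient F w, gradient Ft w⟫ := by
    have e1 : ⟪gradient F w, gradient Ft w⟫
        = ⟪gradient F w, gradient F w⟫ + ⟪gradient F w, gradient Ft w - gradient F w⟫ := by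
      rw [← inner_add_right, add_sub_cancel]
    have e2 : ⟪gradient F w, gradient F w⟫ = ‖gradient F w‖ ^ 2 :=
      real_inner_self_eq_norm_sq _
    have e3 : -(‖gradient F w‖ * (ω * ‖gradient F w‖ + ε))
        ≤ ⟪gradient F w, gradient Ft w - gradient F w⟫ := by
      have h8 := real_inner_le_norm (gradient F w) (-(gradient Ft w - gradient F w))
      rw [inner_neg_right, norm_neg] at h8
      have h9 := mul_le_mul_of_nonneg_left happrox hGnn
      linarith
    rw [e1, e2]
    nlinarith [e3]
  -- norm upper bound
  have hGt : ‖gradient Ft w‖ ≤ (1 + ω) * ‖gradient F w‖ + ε := by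
    calc ‖gradient Ft w‖ = ‖gradient F w + (gradient Ft w - gradient F w)‖ := by
          rw [add_sub_cancel]
      _ ≤ ‖gradient F w‖ + ‖gradient Ft w - gradient F w‖ := norm_add_le _ _
      _ ≤ (1 + ω) * ‖gradient F w‖ + ε := by linarith [happrox]
  exact arith_aux L ω ε η ‖gradient F w‖ ‖gradient Ft w‖ _ (F w) _
    hL hω0 hω1 hε hη0 hη hGnn (norm_nonneg _) hA hI hGt
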